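/- Let 0 < ε' ≤ ε and suppose the finite metric space (X, d^ε) admits an isometric embedding into some Euclidean space ℝ^m, i.e., there is φ : X → ℝ^m with ‖φ(u) − φ(v)‖ = d(u, v)^ε for all u, v ∈ X. Then (X, d^{ε'}) also admits an isometric embedding into some Euclidean space: there exist m' ∈ ℕ and ψ : X → ℝ^{m'} with ‖ψ(u) − ψ(v)‖ = d(u, v)^{ε'} for all u, v ∈ X. -/

import Mathlib

section SnowflakeAux
open MeasureTheory Set Real Finset Nat
open scoped ENNReal

-- Piece 1: PD of inner-product powers
lemma gram_pow_nonneg {X : Type*} [Fintype X] {m : ℕ} (x : X → EuclideanSpace ℝ (Fin m))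
    (f : X → ℝ) (k : ℕ) :
    0 ≤ ∑ u, ∑ v, f u * f v * (inner ℝ (x u) (x v) : ℝ) ^ k := by
  have h1 : ∀ u v : X, (inner ℝ (x u) (x v) : ℝ) ^ k =
      ∑ g ∈ Fintype.piFinset (fun _ : Fin k => (Finset.univ : Finset (Fin m))),
        (∏ j, x u (g j)) * (∏ j, x v (g j)) := by
    intro u v
    have : (inner ℝ (x u) (x v) : ℝ) = ∑ i, x u i * x v i := by
      simp [PiLp.inner_apply, RCLike.inner_apply, mul_comm]
    rw [this, ← Fin.prod_const k, Finset.prod_univ_sum]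
    exact Finset.sum_congr rfl fun g _ => by rw [Finset.prod_mul_distrib]
  calc (0:ℝ) ≤ ∑ g ∈ Fintype.piFinset (fun _ : Fin k => (Finset.univ : Finset (Fin m))),
        (∑ u, f u * ∏ j, x u (g j)) ^ 2 :=
        Finset.sum_nonneg fun g _ => sq_nonneg _
    _ = ∑ u, ∑ v, f u * f v * (inner ℝ (x u) (x v) : ℝ) ^ k := by
        simp_rw [h1, sq, Finset.sum_mul_sum, Finset.mul_sum]
        rw [Finset.sum_comm]
        refine Finset.sum_congr rfl fun u _ => ?_
        rw [Finset.sum_comm]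
        refine Finset.sum_congr rfl fun v _ => Finset.sum_congr rfl fun g _ => by ring

lemma exp_inner_pd {X : Type*} [Fintype X] {m : ℕ} (x : X → EuclideanSpace ℝ (Fin m))
    (f : X → ℝ) (r : ℝ) (hr : 0 ≤ r) :
    0 ≤ ∑ u, ∑ v, f u * f v * Real.exp (r * (inner ℝ (x u) (x v) : ℝ)) := by
  have hexp : ∀ z : ℝ, Real.exp z = ∑' k : ℕ, z ^ k / k ! := by
    intro z
    rw [Real.exp_eq_exp_ℝ, NormedSpace.exp_eq_tsum_div]
  have hsum : ∀ u v : X, Summable (fun k : ℕ =>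
      f u * f v * ((r * (inner ℝ (x u) (x v) : ℝ)) ^ k / k !)) :=
    fun u v => (Real.summable_pow_div_factorial _).mul_left _
  calc (0:ℝ) ≤ ∑' k : ℕ, ∑ u, ∑ v, f u * f v * ((r * (inner ℝ (x u) (x v) : ℝ)) ^ k / k !) := by
        refine tsum_nonneg fun k => ?_
        have : ∑ u, ∑ v, f u * f v * ((r * (inner ℝ (x u) (x v) : ℝ)) ^ k / k !)
            = (r ^ k / k !) * ∑ u, ∑ v, f u * f v * (inner ℝ (x u) (x v) : ℝ) ^ k := by
          simp_rw [Finset.mul_sum]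
          refine Finset.sum_congr rfl fun u _ => Finset.sum_congr rfl fun v _ => by
            rw [mul_pow]; ring
        rw [this]
        exact mul_nonneg (div_nonneg (pow_nonneg hr _) (by positivity)) (gram_pow_nonneg x f k)
    _ = ∑ u, ∑ v, f u * f v * Real.exp (r * (inner ℝ (x u) (x v) : ℝ)) := by
        rw [Summable.tsum_finsetSum (fun u _ => summable_sum fun v _ => hsum u v)]
        refine Finset.sum_congr rfl fun u _ => ?_
        rw [Summable.tsum_finsetSum (fun v _ => hsum u v)]
        refine Finset.sum_congr rfl fun v _ => ?_
        rw [hexp, ← tsum_mul_left]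

lemma gaussian_pd {X : Type*} [Fintype X] {m : ℕ} (x : X → EuclideanSpace ℝ (Fin m))
    (c : X → ℝ) (t : ℝ) (ht : 0 ≤ t) :
    0 ≤ ∑ u, ∑ v, c u * c v * Real.exp (-(t * ‖x u - x v‖ ^ 2)) := by
  have key : ∀ u v : X, c u * c v * Real.exp (-(t * ‖x u - x v‖ ^ 2)) =
      (c u * Real.exp (-(t * ‖x u‖ ^ 2))) * (c v * Real.exp (-(t * ‖x v‖ ^ 2))) *
        Real.exp ((2 * t) * (inner ℝ (x u) (x v) : ℝ)) := by
    intro u v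
    rw [@norm_sub_sq_real]
    rw [show (-(t * (‖x u‖ ^ 2 - 2 * (inner ℝ (x u) (x v) : ℝ) + ‖x v‖ ^ 2)))
        = (-(t * ‖x u‖ ^ 2)) + (-(t * ‖x v‖ ^ 2)) + ((2*t) * (inner ℝ (x u) (x v) : ℝ)) by ring,
      Real.exp_add, Real.exp_add]
    ring
  simp_rw [key]
  exact exp_inner_pd x (fun u => c u * Real.exp (-(t * ‖x u‖ ^ 2))) (2 * t) (by linarith)

lemma gaussian_cnd {X : Type*} [Fintype X] {m : ℕ} (x : X → EuclideanSpace ℝ (Fin m))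
    (b : X → ℝ) (hb : ∑ u, b u = 0) (t : ℝ) (ht : 0 ≤ t) :
    ∑ u, ∑ v, b u * b v * (1 - Real.exp (-(t * ‖x u - x v‖ ^ 2))) ≤ 0 := by
  have h1 : ∑ u, ∑ v, b u * b v * (1 - Real.exp (-(t * ‖x u - x v‖ ^ 2)))
      = (∑ u, b u) ^ 2 - ∑ u, ∑ v, b u * b v * Real.exp (-(t * ‖x u - x v‖ ^ 2)) := by
    rw [sq, Finset.sum_mul_sum, ← Finset.sum_sub_distrib]
    refine Finset.sum_congr rfl fun u _ => ?_
    rw [← Finset.sum_sub_distrib]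
    exact Finset.sum_congr rfl fun v _ => by ring
  rw [h1, hb]
  have := gaussian_pd x b t ht
  nlinarith

lemma snow_g_integrable {α : ℝ} (hα : 0 < α) (hα1 : α < 1) :
    IntegrableOn (fun u : ℝ => (1 - Real.exp (-u)) * u ^ (-1 - α)) (Ioi 0) := by
  have hcont : ∀ s : Set ℝ, s ⊆ Ioi 0 →
      ContinuousOn (fun u : ℝ => (1 - Real.exp (-u)) * u ^ (-1 - α)) s := by
    intro s hs
    refine ContinuousOn.mul (Continuous.continuousOn (by continuity)) ?_
    exact ContinuousOn.rpow_const continuousOn_id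
      (fun u hu => Or.inl (ne_of_gt (hs hu)))
  have h01 : IntegrableOn (fun u : ℝ => (1 - Real.exp (-u)) * u ^ (-1 - α)) (Ioc 0 1) := by
    have hbase : IntegrableOn (fun u : ℝ => u ^ (-α)) (Ioc 0 1) := by
      have := (intervalIntegral.integrableOn_Ioo_rpow_iff (t := 1) one_pos (s := -α)).mpr (by linarith)
      exact this.congr_set_ae Ioo_ae_eq_Ioc.symm
    refine Integrable.mono' hbase
      ((hcont _ Ioc_subset_Ioi_self).aestronglyMeasurable measurableSet_Ioc) ?_
    refine (ae_restrict_iff' measurableSet_Ioc).mpr (ae_of_all _ fun u hu => ?_)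
    have hu0 : 0 < u := hu.1
    have h1 : 0 ≤ 1 - Real.exp (-u) := by
      have := Real.exp_le_one_iff.mpr (by linarith : -u ≤ 0); linarith
    have h2 : 1 - Real.exp (-u) ≤ u := by
      have := Real.add_one_le_exp (-u); linarith
    rw [Real.norm_eq_abs, abs_of_nonneg (mul_nonneg h1 (Real.rpow_nonneg hu0.le _))]
    calc (1 - Real.exp (-u)) * u ^ (-1 - α) ≤ u * u ^ (-1 - α) :=
          mul_le_mul_of_nonneg_right h2 (Real.rpow_nonneg hu0.le _)
      _ = u ^ (-α) := by
          rw [← Real.rpow_one_add' (le_of_lt hu0) (by linarith : (1:ℝ) + (-1 - α) ≠ 0)]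
          ring_nf
  have h1i : IntegrableOn (fun u : ℝ => (1 - Real.exp (-u)) * u ^ (-1 - α)) (Ioi 1) := by
    have hbase : IntegrableOn (fun u : ℝ => u ^ (-1 - α)) (Ioi 1) :=
      integrableOn_Ioi_rpow_of_lt (by linarith) one_pos
    refine Integrable.mono' hbase
      ((hcont _ (fun u (hu : (1:ℝ) < u) => lt_trans one_pos hu)).aestronglyMeasurable measurableSet_Ioi) ?_
    refine (ae_restrict_iff' measurableSet_Ioi).mpr (ae_of_all _ fun u hu => ?_)
    have hu0 : (0:ℝ) < u := lt_trans one_pos hu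
    have h1 : 0 ≤ 1 - Real.exp (-u) := by
      have := Real.exp_le_one_iff.mpr (by linarith : -u ≤ 0); linarith
    have h2 : 1 - Real.exp (-u) ≤ 1 := by have := Real.exp_pos (-u); linarith
    rw [Real.norm_eq_abs, abs_of_nonneg (mul_nonneg h1 (Real.rpow_nonneg hu0.le _))]
    nlinarith [Real.rpow_nonneg hu0.le (-1-α), mul_le_mul_of_nonneg_right h2 (Real.rpow_nonneg hu0.le (-1-α))]
  have : Set.Ioc (0:ℝ) 1 ∪ Set.Ioi 1 = Set.Ioi 0 := Set.Ioc_union_Ioi_eq_Ioi one_pos.le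
  rw [← this]
  exact h01.union h1i

lemma snow_C_pos {α : ℝ} (hα : 0 < α) (hα1 : α < 1) :
    0 < ∫ u in Ioi (0:ℝ), (1 - Real.exp (-u)) * u ^ (-1 - α) := by
  have hpos : ∀ u ∈ Ioi (0:ℝ), 0 < (1 - Real.exp (-u)) * u ^ (-1 - α) := by
    intro u hu
    have hu0 : 0 < u := hu
    have h1 : 0 < 1 - Real.exp (-u) := by
      have : Real.exp (-u) < 1 := Real.exp_lt_one_iff.mpr (by linarith)
      linarith
    exact mul_pos h1 (Real.rpow_pos_of_pos hu0 _)
  rw [setIntegral_pos_iff_support_of_nonneg_ae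
    ((ae_restrict_iff' measurableSet_Ioi).mpr (ae_of_all _ fun u hu => (hpos u hu).le))
    (snow_g_integrable hα hα1)]
  have hsub : Ioi (0:ℝ) ⊆ Function.support (fun u : ℝ => (1 - Real.exp (-u)) * u ^ (-1 - α)) :=
    fun u hu => ne_of_gt (hpos u hu)
  calc (0:ℝ≥0∞) < volume (Ioi (0:ℝ)) := by simp [Real.volume_Ioi]
    _ = volume (Function.support (fun u : ℝ => (1 - Real.exp (-u)) * u ^ (-1 - α)) ∩ Ioi 0) := by
        rw [Set.inter_eq_right.mpr hsub]

lemma snow_scale_eq {α s : ℝ} (hs : 0 < s) :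
    ∀ t ∈ Ioi (0:ℝ), (1 - Real.exp (-(t * s))) * t ^ (-1 - α)
      = s ^ (1 + α) * ((1 - Real.exp (-(s * t))) * (s * t) ^ (-1 - α)) := by
  intro t ht
  have ht0 : (0:ℝ) < t := ht
  rw [Real.mul_rpow hs.le ht0.le, mul_comm t s]
  rw [show s ^ (1+α) * ((1 - Real.exp (-(s*t))) * (s ^ (-1-α) * t ^ (-1-α)))
      = (s ^ (1+α) * s ^ (-1-α)) * ((1 - Real.exp (-(s*t))) * t ^ (-1-α)) by ring,
    ← Real.rpow_add hs]
  norm_num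

lemma snow_comp_integrable {α : ℝ} (hα : 0 < α) (hα1 : α < 1) {s : ℝ} (hs' : 0 < s) :
    IntegrableOn (fun t : ℝ => (1 - Real.exp (-(s * t))) * (s * t) ^ (-1 - α)) (Ioi 0) := by
  have hg : IntegrableOn (fun u : ℝ => (1 - Real.exp (-u)) * u ^ (-1 - α)) (Ioi (s * 0)) := by
    rw [mul_zero]; exact snow_g_integrable hα hα1
  exact (integrableOn_Ioi_comp_mul_left_iff
    (fun u : ℝ => (1 - Real.exp (-u)) * u ^ (-1 - α)) 0 hs').mpr hg

lemma snow_integrable_scaled {α : ℝ} (hα : 0 < α) (hα1 : α < 1) {s : ℝ} (hs : 0 ≤ s) :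
    IntegrableOn (fun t : ℝ => (1 - Real.exp (-(t * s))) * t ^ (-1 - α)) (Ioi 0) := by
  rcases eq_or_lt_of_le hs with h | hs'
  · have : ∀ t ∈ Ioi (0:ℝ), (0:ℝ) = (1 - Real.exp (-(t * s))) * t ^ (-1 - α) := by
      intro t ht; rw [← h]; simp
    exact (integrableOn_congr_fun this measurableSet_Ioi).mp ((integrableOn_const_iff (C := (0:ℝ))).mpr (Or.inl (by simp)))
  · have hbase := ((snow_comp_integrable hα hα1 hs').const_mul (s ^ (1+α)))
    refine (integrableOn_congr_fun ?_ measurableSet_Ioi).mp hbase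
    exact fun t ht => (snow_scale_eq (α := α) hs' t ht).symm

lemma snow_integral_eq {α : ℝ} (hα : 0 < α) (hα1 : α < 1) {s : ℝ} (hs : 0 ≤ s) :
    ∫ t in Ioi (0:ℝ), (1 - Real.exp (-(t * s))) * t ^ (-1 - α)
      = (∫ u in Ioi (0:ℝ), (1 - Real.exp (-u)) * u ^ (-1 - α)) * s ^ α := by
  rcases eq_or_lt_of_le hs with h | hs'
  · rw [← h]
    rw [setIntegral_congr_fun measurableSet_Ioi (g := fun _ => (0:ℝ))
      (fun t ht => by simp)]
    simp [Real.zero_rpow (ne_of_gt hα)]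
  · rw [setIntegral_congr_fun measurableSet_Ioi (snow_scale_eq (α := α) hs')]
    rw [integral_const_mul]
    have hci := integral_comp_mul_left_Ioi
      (fun u : ℝ => (1 - Real.exp (-u)) * u ^ (-1 - α)) 0 hs'
    rw [mul_zero] at hci
    rw [hci, smul_eq_mul, ← mul_assoc, mul_comm (s ^ (1+α)) s⁻¹,
      ← Real.rpow_neg_one s, ← Real.rpow_add hs']
    rw [mul_comm]
    norm_num

/-- CND of the α-power of squared Euclidean distances. -/
lemma rpow_dist_cnd {X : Type*} [Fintype X] {m : ℕ} (x : X → EuclideanSpace ℝ (Fin m))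
    {α : ℝ} (hα : 0 < α) (hα1 : α < 1) (b : X → ℝ) (hb : ∑ u, b u = 0) :
    ∑ u, ∑ v, b u * b v * (‖x u - x v‖ ^ 2) ^ α ≤ 0 := by
  set C := ∫ u in Ioi (0:ℝ), (1 - Real.exp (-u)) * u ^ (-1 - α) with hC
  have hCpos := snow_C_pos hα hα1
  have hint : ∀ u v : X,
      (‖x u - x v‖ ^ 2) ^ α = C⁻¹ * ∫ t in Ioi (0:ℝ),
        (1 - Real.exp (-(t * ‖x u - x v‖ ^ 2))) * t ^ (-1 - α) := by
    intro u v
    rw [snow_integral_eq hα hα1 (sq_nonneg _), ← hC, inv_mul_cancel_left₀ (ne_of_gt hCpos)]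
  have hswap : ∑ u, ∑ v, b u * b v * (‖x u - x v‖ ^ 2) ^ α
      = C⁻¹ * ∫ t in Ioi (0:ℝ),
          ∑ u, ∑ v, b u * b v * ((1 - Real.exp (-(t * ‖x u - x v‖ ^ 2))) * t ^ (-1 - α)) := by
    rw [integral_finset_sum _ (fun u _ => integrable_finset_sum _ (fun v _ =>
      ((snow_integrable_scaled hα hα1 (sq_nonneg (‖x u - x v‖))).const_mul (b u * b v))))]
    rw [Finset.mul_sum]
    refine Finset.sum_congr rfl fun u _ => ?_
    rw [integral_finset_sum _ (fun v _ =>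
      ((snow_integrable_scaled hα hα1 (sq_nonneg (‖x u - x v‖))).const_mul (b u * b v)))]
    rw [Finset.mul_sum]
    refine Finset.sum_congr rfl fun v _ => ?_
    rw [hint u v, MeasureTheory.integral_const_mul]
    ring
  rw [hswap]
  have hneg : ∫ t in Ioi (0:ℝ),
      ∑ u, ∑ v, b u * b v * ((1 - Real.exp (-(t * ‖x u - x v‖ ^ 2))) * t ^ (-1 - α)) ≤ 0 := by
    refine setIntegral_nonpos measurableSet_Ioi fun t ht => ?_
    have ht0 : (0:ℝ) < t := ht
    have heq : ∑ u, ∑ v, b u * b v * ((1 - Real.exp (-(t * ‖x u - x v‖ ^ 2))) * t ^ (-1 - α))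
        = (∑ u, ∑ v, b u * b v * (1 - Real.exp (-(t * ‖x u - x v‖ ^ 2)))) * t ^ (-1 - α) := by
      rw [Finset.sum_mul]
      refine Finset.sum_congr rfl fun u _ => ?_
      rw [Finset.sum_mul]
      exact Finset.sum_congr rfl fun v _ => by ring
    rw [heq]
    exact mul_nonpos_of_nonpos_of_nonneg (gaussian_cnd x b hb t ht0.le)
      (Real.rpow_nonneg ht0.le _)
  exact mul_nonpos_of_nonneg_of_nonpos (inv_nonneg.mpr hCpos.le) hneg

lemma embed_of_cnd {X : Type*} [Fintype X] [Nonempty X] [DecidableEq X] (K : X → X → ℝ)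
    (hsymm : ∀ u v, K u v = K v u) (hdiag : ∀ u, K u u = 0)
    (hcnd : ∀ b : X → ℝ, ∑ u, b u = 0 → ∑ u, ∑ v, b u * b v * K u v ≤ 0) :
    ∃ ψ : X → EuclideanSpace ℝ (Fin (Fintype.card X)),
      ∀ u v, ‖ψ u - ψ v‖ ^ 2 = K u v := by
  classical
  obtain ⟨x₀⟩ := ‹Nonempty X›
  let G : X → X → ℝ := fun u v => (K u x₀ + K v x₀ - K u v) / 2
  have hGdef : ∀ u v, G u v = (K u x₀ + K v x₀ - K u v) / 2 := fun u v => rfl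
  have hGpsd : ∀ c : X → ℝ, 0 ≤ ∑ u, ∑ v, c u * c v * G u v := by
    intro c
    have hd : ∀ f : X → ℝ, ∑ u, (if u = x₀ then (∑ w, c w) else 0) * f u
        = (∑ w, c w) * f x₀ := by
      intro f
      simp [ite_mul, Finset.sum_ite_eq']
    set d : X → ℝ := fun u => if u = x₀ then (∑ w, c w) else 0 with hdd
    set b : X → ℝ := fun u => c u - d u with hb
    have hbsum : ∑ u, b u = 0 := by
      simp only [hb, Finset.sum_sub_distrib]
      have h1 : ∑ u, d u = ∑ w, c w := by simpa [hdd] using hd (fun _ => 1)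
      rw [h1]; ring
    have hA2 : ∑ u, ∑ v, d u * (c v * K u v)
        = (∑ w, c w) * ∑ u, c u * K u x₀ := by
      calc ∑ u, ∑ v, d u * (c v * K u v) = ∑ u, d u * ∑ v, c v * K u v := by
            exact Finset.sum_congr rfl fun u _ => (Finset.mul_sum _ _ _).symm
        _ = (∑ w, c w) * ∑ v, c v * K x₀ v := hd _
        _ = (∑ w, c w) * ∑ u, c u * K u x₀ := by
            congr 1
            exact Finset.sum_congr rfl fun v _ => by rw [hsymm x₀ v]
    have hA3 : ∑ u, ∑ v, d v * (c u * K u v)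
        = (∑ w, c w) * ∑ u, c u * K u x₀ := by
      rw [Finset.sum_congr rfl (fun u _ => hd (fun v => c u * K u v)), ← Finset.mul_sum]
    have hA4 : ∑ u, ∑ v, d u * (d v * K u v) = 0 := by
      rw [Finset.sum_comm]
      calc ∑ v, ∑ u, d u * (d v * K u v)
          = ∑ v, (∑ w, c w) * (d v * K x₀ v) := by
            exact Finset.sum_congr rfl fun v _ => hd (fun u => d v * K u v)
        _ = ∑ v, d v * ((∑ w, c w) * K x₀ v) := by
            exact Finset.sum_congr rfl fun v _ => by ring
        _ = (∑ w, c w) * ((∑ w, c w) * K x₀ x₀) := hd _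
        _ = 0 := by rw [hdiag x₀]; ring
    have hexp : ∑ u, ∑ v, b u * b v * K u v
        = ∑ u, ∑ v, c u * c v * K u v
          - 2 * ((∑ w, c w) * ∑ u, c u * K u x₀) := by
      have hterm : ∀ u v : X, b u * b v * K u v
          = c u * c v * K u v - d u * (c v * K u v) - d v * (c u * K u v)
            + d u * (d v * K u v) := by
        intro u v; simp only [hb]; ring
      simp_rw [hterm, Finset.sum_add_distrib, Finset.sum_sub_distrib]
      rw [hA2, hA3, hA4]; ring
    have e1 : ∑ u, ∑ v, (c u * K u x₀) * c v
        = (∑ u, c u * K u x₀) * (∑ w, c w) := by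
      calc ∑ u, ∑ v, (c u * K u x₀) * c v = ∑ u, (c u * K u x₀) * ∑ w, c w :=
            Finset.sum_congr rfl fun u _ => (Finset.mul_sum _ _ _).symm
        _ = (∑ u, c u * K u x₀) * (∑ w, c w) := (Finset.sum_mul _ _ _).symm
    have e2 : ∑ u, ∑ v, c u * (c v * K v x₀)
        = (∑ w, c w) * (∑ u, c u * K u x₀) := by
      calc ∑ u, ∑ v, c u * (c v * K v x₀) = ∑ u, c u * ∑ v, c v * K v x₀ :=
            Finset.sum_congr rfl fun u _ => (Finset.mul_sum _ _ _).symm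
        _ = (∑ w, c w) * (∑ u, c u * K u x₀) := (Finset.sum_mul _ _ _).symm
    have hGsum : ∑ u, ∑ v, c u * c v * G u v
        = (∑ w, c w) * (∑ u, c u * K u x₀)
          - (∑ u, ∑ v, c u * c v * K u v) / 2 := by
      have hterm : ∀ u v : X, c u * c v * G u v
          = ((c u * K u x₀) * c v + c u * (c v * K v x₀) - c u * c v * K u v) / 2 := by
        intro u v; rw [hGdef]; ring
      have inner : ∀ u, ∑ v, ((c u * K u x₀) * c v + c u * (c v * K v x₀)
            - c u * c v * K u v) / 2
          = ((∑ v, (c u * K u x₀) * c v) + (∑ v, c u * (c v * K v x₀))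
            - ∑ v, c u * c v * K u v) / 2 := by
        intro u
        rw [← Finset.sum_div, Finset.sum_sub_distrib, Finset.sum_add_distrib]
      simp_rw [hterm]
      rw [Finset.sum_congr rfl fun u _ => inner u, ← Finset.sum_div,
        Finset.sum_sub_distrib, Finset.sum_add_distrib, e1, e2]
      ring
    have hfin := hcnd b hbsum
    rw [hexp] at hfin
    rw [hGsum]
    linarith
  set A : Matrix X X ℝ := Matrix.of G with hA
  have hAapp : ∀ u v, A u v = G u v := fun u v => rfl
  have hApsd : A.PosSemidef := by
    refine Matrix.PosSemidef.of_dotProduct_mulVec_nonneg ?_ ?_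
    · ext u v
      rw [Matrix.conjTranspose_apply, hAapp, hAapp, star_trivial, hGdef, hGdef, hsymm v u]
      ring
    · intro x
      have hdp : dotProduct (star x) (A.mulVec x) = ∑ u, ∑ v, x u * x v * G u v := by
        simp only [dotProduct, Matrix.mulVec, Pi.star_apply, star_trivial,
          Finset.mul_sum, hAapp]
        exact Finset.sum_congr rfl fun u _ => Finset.sum_congr rfl fun v _ => by ring
      rw [hdp]
      exact hGpsd x
  have hBex : ∃ B : Matrix X X ℝ, Matrix.conjTranspose B = B ∧ B * B = A := by
    open scoped MatrixOrder in
    exact ⟨CFC.sqrt A, (IsSelfAdjoint.of_nonneg (CFC.sqrt_nonneg A)).star_eq,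
      CFC.sqrt_mul_sqrt_self A hApsd.nonneg⟩
  obtain ⟨B, hBh, hBB⟩ := hBex
  have hBsym : ∀ u v, B u v = B v u := by
    intro u v
    have h : Matrix.conjTranspose B = B := hBh
    conv_lhs => rw [← h]
    simp [Matrix.conjTranspose_apply]
  have hAB : ∀ u v, ∑ w, B w u * B w v = A u v := by
    intro u v
    have h : (B * B) u v = A u v := by rw [hBB]
    rw [Matrix.mul_apply] at h
    rw [← h]
    exact Finset.sum_congr rfl fun w _ => by rw [hBsym u w]
  set e := (Fintype.equivFin X)
  set ψ : X → EuclideanSpace ℝ (Fin (Fintype.card X)) :=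
    fun u => (WithLp.equiv 2 _).symm (fun i => B (e.symm i) u) with hψ
  refine ⟨ψ, fun u v => ?_⟩
  have happ : ∀ (w : X) (i : Fin (Fintype.card X)), ψ w i = B (e.symm i) w := by
    intro w i
    rfl
  have hnorm : ‖ψ u - ψ v‖ = Real.sqrt (∑ i, ‖(ψ u - ψ v) i‖ ^ 2) :=
    EuclideanSpace.norm_eq _
  have hcomp : ∀ i, ‖(ψ u - ψ v) i‖ ^ 2 = (B (e.symm i) u - B (e.symm i) v) ^ 2 := by
    intro i
    rw [PiLp.sub_apply, happ, happ, Real.norm_eq_abs, sq_abs]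
  rw [hnorm, Real.sq_sqrt (Finset.sum_nonneg fun i _ => sq_nonneg _)]
  rw [Finset.sum_congr rfl (fun i _ => hcomp i)]
  rw [Equiv.sum_comp e.symm (fun w => (B w u - B w v) ^ 2)]
  have hsplit : ∑ w, (B w u - B w v) ^ 2
      = (∑ w, B w u * B w u) - 2 * (∑ w, B w u * B w v) + (∑ w, B w v * B w v) := by
    have hc : ∀ w, (B w u - B w v) ^ 2
        = B w u * B w u - 2 * (B w u * B w v) + B w v * B w v := fun w => by ring
    simp_rw [hc, Finset.sum_add_distrib, Finset.sum_sub_distrib, ← Finset.mul_sum]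
  rw [hsplit, hAB, hAB, hAB, hAapp, hAapp, hAapp, hGdef, hGdef, hGdef,
    hdiag u, hdiag v]
  ring

end SnowflakeAux

/-- if the `ε`-snowflake of a finite metric space `X` embeds isometrically
into some Euclidean space, then so does the `ε'`-snowflake for every `0 < ε' ≤ ε`. -/
theorem snowflake_embedding_monotone {X : Type*} [MetricSpace X] [Fintype X]
    (ε ε' : ℝ) (hε' : 0 < ε') (hle : ε' ≤ ε)
    (m : ℕ) (φ : X → EuclideanSpace ℝ (Fin m))
    (hφ : ∀ u v : X, ‖φ u - φ v‖ = dist u v ^ ε) :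
    ∃ (m' : ℕ) (ψ : X → EuclideanSpace ℝ (Fin m')),
      ∀ u v : X, ‖ψ u - ψ v‖ = dist u v ^ ε' := by
  classical
  rcases isEmpty_or_nonempty X with hX | hX
  · exact ⟨0, fun _ => 0, fun u v => isEmptyElim u⟩
  have hε : 0 < ε := lt_of_lt_of_le hε' hle
  rcases eq_or_lt_of_le hle with heq | hlt
  · subst heq
    exact ⟨m, φ, hφ⟩
  set α := ε' / ε with hαdef
  have hα : 0 < α := div_pos hε' hε
  have hα1 : α < 1 := (div_lt_one hε).mpr hlt
  set K : X → X → ℝ := fun u v => (dist u v ^ ε') ^ 2 with hKdef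
  have hsymm : ∀ u v, K u v = K v u := fun u v => by simp [hKdef, dist_comm]
  have hdiag : ∀ u, K u u = 0 := fun u => by
    simp [hKdef, Real.zero_rpow (ne_of_gt hε')]
  have hK : ∀ u v, K u v = (‖φ u - φ v‖ ^ 2) ^ α := by
    intro u v
    have hd : (0:ℝ) ≤ dist u v := dist_nonneg
    simp only [hKdef]
    rw [hφ u v]
    rw [← Real.rpow_natCast (dist u v ^ ε') 2, ← Real.rpow_natCast (dist u v ^ ε) 2,
      ← Real.rpow_mul hd, ← Real.rpow_mul hd, ← Real.rpow_mul hd]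
    congr 1
    rw [hαdef]
    push_cast
    field_simp
  have hcnd : ∀ b : X → ℝ, ∑ u, b u = 0 → ∑ u, ∑ v, b u * b v * K u v ≤ 0 := by
    intro b hb
    simp_rw [hK]
    exact rpow_dist_cnd φ hα hα1 b hb
  obtain ⟨ψ, hψ⟩ := embed_of_cnd K hsymm hdiag hcnd
  refine ⟨Fintype.card X, ψ, fun u v => ?_⟩
  have h2 := hψ u v
  simp only [hKdef] at h2
  calc ‖ψ u - ψ v‖ = Real.sqrt (‖ψ u - ψ v‖ ^ 2) := (Real.sqrt_sq (norm_nonneg _)).symm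
    _ = Real.sqrt ((dist u v ^ ε') ^ 2) := by rw [h2]
    _ = dist u v ^ ε' := Real.sqrt_sq (Real.rpow_nonneg dist_nonneg _)
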